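/- Let G be a connected simple graph and suppose every cycle of G has length divisible by 3 when counted with signs along a fixed orientation (i.e., for the all-ones weighting on a fixed orientation, every cycle has effective length ≡ 0 mod 3). Then G is properly 3-colourable. -/

import Mathlib

open Classical

/-- The underlying simple graph of a digraph given by its set `E` of directed
edges (ordered pairs of distinct vertices). -/
def underlyingGraph {V : Type*} (E : Set (V × V)) : SimpleGraph V :=
  SimpleGraph.fromRel (fun u v => (u, v) ∈ E)

/-- The effective length of a walk in the underlying graph of a digraph with edge
set `E`, with edge weights `w` in an abelian group: forward edges count
positively, backward edges negatively. -/
noncomputable def effLen {V Γ : Type*} [AddCommGroup Γ] (E : Set (V × V)) (w : V × V → Γ)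
    {a b : V} (p : (underlyingGraph E).Walk a b) : Γ :=
  (p.darts.map (fun d =>
    if d.toProd ∈ E then w d.toProd else - w (d.toProd.2, d.toProd.1))).sum

section Aux

open SimpleGraph Walk

variable {V Γ : Type*} [AddCommGroup Γ] (E : Set (V × V)) (w : V × V → Γ)

/-- The value of a dart. -/
noncomputable def dartVal (d : (underlyingGraph E).Dart) : Γ :=
  if d.toProd ∈ E then w d.toProd else - w (d.toProd.2, d.toProd.1)

theorem effLen_eq {a b : V} (p : (underlyingGraph E).Walk a b) :
    effLen E w p = (p.darts.map (dartVal E w)).sum := rfl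

theorem effLen_nil {a : V} : effLen E w (.nil : (underlyingGraph E).Walk a a) = 0 := rfl

theorem effLen_cons {a b c : V} (h : (underlyingGraph E).Adj a b)
    (p : (underlyingGraph E).Walk b c) :
    effLen E w (.cons h p) = dartVal E w ⟨(a, b), h⟩ + effLen E w p := by
  simp [effLen_eq, darts_cons]

theorem effLen_append {a b c : V} (p : (underlyingGraph E).Walk a b)
    (q : (underlyingGraph E).Walk b c) :
    effLen E w (p.append q) = effLen E w p + effLen E w q := by
  simp [effLen_eq, darts_append]

theorem dartVal_symm (hasym : ∀ p ∈ E, (p.2, p.1) ∉ E) (d : (underlyingGraph E).Dart) :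
    dartVal E w d.symm = - dartVal E w d := by
  obtain ⟨⟨x, y⟩, hadj⟩ := d
  have h := hadj
  rw [underlyingGraph, SimpleGraph.fromRel_adj] at h
  show (if (y, x) ∈ E then w (y, x) else -w (x, y)) = -(if (x, y) ∈ E then w (x, y) else -w (y, x))
  rcases h.2 with h1 | h1
  · rw [if_pos h1, if_neg (hasym _ h1)]
  · rw [if_pos h1, if_neg (hasym _ h1), neg_neg]

theorem neg_sum_map {α : Type*} (f : α → Γ) (l : List α) :
    (l.map fun x => - f x).sum = - (l.map f).sum := by
  induction l with
  | nil => simp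
  | cons x l ih => simp [ih]; abel

theorem effLen_reverse (hasym : ∀ p ∈ E, (p.2, p.1) ∉ E) {a b : V}
    (p : (underlyingGraph E).Walk a b) :
    effLen E w p.reverse = - effLen E w p := by
  rw [effLen_eq, effLen_eq, darts_reverse, List.map_reverse, List.sum_reverse, List.map_map]
  rw [show (dartVal E w ∘ SimpleGraph.Dart.symm) = (fun d => - dartVal E w d) from
    funext fun d => dartVal_symm E w hasym d]
  exact neg_sum_map _ _

theorem effLen_rotate {a v : V} (c : (underlyingGraph E).Walk a a) (h : v ∈ c.support) :
    effLen E w (c.rotate v h) = effLen E w c := by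
  simp only [effLen_eq]
  exact ((rotate_darts c v h).perm.map _).sum_eq

/-- Splitting a closed walk at a second occurrence of its base point. -/
theorem split_closed {v : V} (c : (underlyingGraph E).Walk v v)
    (h2 : 2 ≤ c.support.tail.count v) :
    ∃ (c₁ c₂ : (underlyingGraph E).Walk v v),
      effLen E w c = effLen E w c₁ + effLen E w c₂ ∧
      c₁.length + c₂.length = c.length ∧ 1 ≤ c₁.length ∧ 1 ≤ c₂.length := by
  cases c with
  | nil => simp at h2
  | cons hadj t =>
    rename_i b
    have hv : v ∈ t.support := by
      have : 0 < t.support.count v := by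
        simpa [support_cons] using lt_of_lt_of_le (by norm_num) h2
      exact List.count_pos_iff.mp this
    refine ⟨.cons hadj (t.takeUntil v hv), t.dropUntil v hv, ?_, ?_, by simp, ?_⟩
    · rw [effLen_cons, effLen_cons]
      have := effLen_append E w (t.takeUntil v hv) (t.dropUntil v hv)
      rw [take_spec] at this
      rw [this, add_assoc]
    · have := congr_arg Walk.length (t.take_spec hv)
      rw [length_append] at this
      simp only [length_cons]
      omega
    · -- the drop part is nonempty
      have hcount : t.support.count v =
          (t.takeUntil v hv).support.count v + ((t.dropUntil v hv).support.tail.count v) := by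
        conv_lhs => rw [← take_spec t hv]
        rw [support_append, List.count_append]
      rw [count_support_takeUntil_eq_one] at hcount
      have h2' : 2 ≤ t.support.count v := by simpa [support_cons] using h2
      have : 1 ≤ ((t.dropUntil v hv).support.tail).count v := by omega
      have hne : ((t.dropUntil v hv).support.tail) ≠ [] := by
        intro h; rw [h] at this; simp at this
      have := length_support (t.dropUntil v hv)
      rcases Nat.eq_zero_or_pos (t.dropUntil v hv).length with h0 | h0
      · exfalso; apply hne
        have : (t.dropUntil v hv).support.length = 1 := by omega
        exact List.eq_nil_of_length_eq_zero (by rw [List.length_tail]; omega)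
      · exact h0

theorem effLen_closed_eq_zero (hasym : ∀ p ∈ E, (p.2, p.1) ∉ E)
    (hcyc : ∀ (a : V) (p : (underlyingGraph E).Walk a a), p.IsCycle →
      effLen E w p = 0) :
    ∀ (n : ℕ) (a : V) (p : (underlyingGraph E).Walk a a), p.length = n →
      effLen E w p = 0 := by
  intro n
  induction n using Nat.strong_induction_on with
  | _ n IH =>
    intro a p hlen
    cases p with
    | nil => exact effLen_nil E w
    | cons hadj q =>
      rename_i b
      have hab : a ≠ b := hadj.ne
      by_cases htwo : 2 ≤ (Walk.cons hadj q).support.tail.count a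
      · obtain ⟨c₁, c₂, heq, hsum, hl1, hl2⟩ := split_closed E w _ htwo
        rw [heq, IH c₁.length (by omega) a c₁ rfl, IH c₂.length (by omega) a c₂ rfl, add_zero]
      · have hcount1 : q.support.count a = 1 := by
          have h1 : 1 ≤ q.support.count a :=
List.count_pos_iff.mpr q.end_mem_support
          simp only [support_cons, List.tail_cons] at htwo
          omega
        by_cases hnodup : q.support.Nodup
        · have hpath : q.IsPath := .mk' hnodup
          by_cases hedge : s(a, b) ∈ q.edges
          · -- the edge a-b occurs in q: forces q to be the single edge b-a
            rw [edges, List.mem_map] at hedge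
            obtain ⟨d, hd, hde⟩ := hedge
            have hcases : d.toProd = (a, b) ∨ d.toProd = (b, a) := by
              have := hde
              obtain ⟨⟨x, y⟩, hxy⟩ := d
              simp only [Dart.edge, Sym2.eq_iff] at this ⊢
              rcases this with ⟨h1, h2⟩ | ⟨h1, h2⟩
              · left; simp_all
              · right; simp_all
            rcases hcases with hd2 | hd2
            · exfalso
              have hmem : a ∈ q.support.dropLast := by
                rw [← map_fst_darts, List.mem_map]
                exact ⟨d, hd, by rw [hd2]⟩
              have hsne : q.support ≠ [] := by simp [support_ne_nil]
              have : q.support = q.support.dropLast ++ [a] := by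
                conv_lhs => rw [← List.dropLast_append_getLast hsne]
                congr 1
                rw [List.getLast_congr _ _ rfl]
                exact congrArg (fun x => [x]) (q.getLast_support)
                exact hsne
              rw [this, List.count_append] at hcount1
              have : 0 < List.count a q.support.dropLast := List.count_pos_iff.mpr hmem
              simp at hcount1
              omega
            · -- d = (b, a); show it is the first dart and q has length 1
              cases q with
              | nil => exact absurd rfl hab.symm
              | cons h' t =>
                rename_i b'
                rw [darts_cons, List.mem_cons] at hd
                rcases hd with hd | hd
                · have hb' : b' = a := by
                    have := congrArg Prod.snd (congrArg Dart.toProd hd)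
                    simpa [hd2] using this.symm.trans (congrArg Prod.snd hd2)
                  subst hb'
                  have ht : t = .nil := by
                    have : t.IsPath := hpath.of_cons
                    rwa [isPath_iff_eq_nil] at this
                  subst ht
                  rw [effLen_cons, effLen_cons, effLen_nil, add_zero]
                  have hsymm := dartVal_symm E w hasym ⟨(_, b), hadj⟩
                  have hdeq : (⟨(_, b), hadj⟩ : (underlyingGraph E).Dart).symm
                      = ⟨(b, _), h'⟩ := by
                    apply Dart.ext
                    rfl
                  rw [hdeq] at hsymm
                  rw [hsymm]
                  exact add_neg_cancel _
                · exfalso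
                  have : d.fst ∈ t.support := dart_fst_mem_support_of_mem_darts _ hd
                  rw [hd2] at this
                  have hnd := hnodup
                  rw [support_cons, List.nodup_cons] at hnd
                  exact hnd.1 this
          · exact hcyc _ _ ((cons_isCycle_iff q hadj).mpr ⟨hpath, hedge⟩)
        · -- q.support has a duplicate vertex v
          obtain ⟨v, hv⟩ := List.exists_duplicate_iff_not_nodup.mpr hnodup
          have hv2 : 2 ≤ q.support.count v := List.duplicate_iff_two_le_count.mp hv
          have hva : v ≠ a := by rintro rfl; omega
          have hvmem : v ∈ (Walk.cons hadj q).support := by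
            simp [support_cons, List.mem_cons]
            exact Or.inr (hv.mem)
          set c := (Walk.cons hadj q).rotate v hvmem with hc
          have heff : effLen E w c = effLen E w (Walk.cons hadj q) :=
            effLen_rotate E w _ hvmem
          have hclen : c.length = (Walk.cons hadj q).length := by
            have h1 := (rotate_darts (Walk.cons hadj q) v hvmem).perm.length_eq
            rw [length_darts, length_darts] at h1
            exact h1
          have htail : 2 ≤ c.support.tail.count v := by
            rw [(support_rotate (Walk.cons hadj q) v hvmem).perm.count_eq]
            simpa [support_cons, List.tail_cons] using hv2
          obtain ⟨c₁, c₂, heq, hsum, hl1, hl2⟩ := split_closed E w c htail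
          rw [← heff, heq, IH c₁.length (by omega) v c₁ rfl,
            IH c₂.length (by omega) v c₂ rfl, add_zero]

end Aux

/-- If, for some fixed orientation of the edges of a connected simple graph, every
cycle has effective length `0 mod 3` with the all-ones weighting (number of forward
edges minus number of backward edges is divisible by `3`), then the graph is
properly `3`-colourable. -/
theorem three_colourable_of_cycles_zero_mod_three {V : Type*}
    (E : Set (V × V)) (hirr : ∀ p ∈ E, p.1 ≠ p.2)
    (hasym : ∀ p ∈ E, (p.2, p.1) ∉ E)
    (hconn : (underlyingGraph E).Connected)
    (hcyc : ∀ (a : V) (p : (underlyingGraph E).Walk a a), p.IsCycle →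
      effLen E (fun _ => (1 : ZMod 3)) p = 0) :
    ∃ c : V → ZMod 3, ∀ u v, (underlyingGraph E).Adj u v → c u ≠ c v := by
  classical
  have hne : Nonempty V := hconn.nonempty
  obtain ⟨v0⟩ := hne
  set w : V × V → ZMod 3 := fun _ => 1 with hw
  have key := effLen_closed_eq_zero E w hasym hcyc
  let walkTo : ∀ v : V, (underlyingGraph E).Walk v0 v := fun v =>
    (hconn.preconnected v0 v).some
  refine ⟨fun v => effLen E w (walkTo v), ?_⟩
  intro u v huv hc
  -- closed walk: walkTo u + edge (u,v) + reverse (walkTo v)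
  set cw : (underlyingGraph E).Walk v0 v0 :=
    ((walkTo u).append (.cons huv .nil)).append (walkTo v).reverse with hcw
  have h0 := key cw.length v0 cw rfl
  rw [hcw, effLen_append, effLen_append, effLen_reverse E w hasym,
    effLen_cons, effLen_nil] at h0
  have hd : dartVal E w (⟨(u, v), huv⟩ : (underlyingGraph E).Dart) ≠ 0 := by
    unfold dartVal
    split <;> simp [hw] <;> decide
  apply hd
  have hc' : effLen E w (walkTo u) = effLen E w (walkTo v) := hc
  rw [hc'] at h0
  linear_combination h0
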